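/- Under the same adaptive revelation setting, the KL divergence between the data distribution p_X and the sampler distribution q (which draws each batch's coordinates independently from their conditional marginals) equals E_{X ~ p_X}[ Σ_{t=1}^T KL( p(X^{D_t} | X^{W_{t-1}}) || Π_{i∈D_t} p(X^i | X^{W_{t-1}}) ) ], i.e., the sum over iterations of the pointwise KL divergence between the true conditional joint of the batch and the product of its conditional marginals, evaluated along the trajectory. -/

import Mathlib

open Finset

/-- Distribution (pmf) of a random variable `X` on a finite probability space `(Ω, μ)`. -/
noncomputable def distOf {Ω α : Type*} [Fintype Ω] [DecidableEq α]
    (μ : Ω → ℝ) (X : Ω → α) : α → ℝ :=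
  fun a => ∑ ω ∈ Finset.univ.filter (fun ω => X ω = a), μ ω

/-- Kullback–Leibler divergence on a finite alphabet (convention `0 * log _ = 0`). -/
noncomputable def KLdiv {α : Type*} [Fintype α] (p q : α → ℝ) : ℝ :=
  ∑ a, p a * Real.log (p a / q a)

/-- Shannon entropy of a pmf on a finite alphabet. -/
noncomputable def entOf {α : Type*} [Fintype α] (p : α → ℝ) : ℝ :=
  -∑ a, p a * Real.log (p a)

/-- Mutual information `I(X;Y) = KL(p_{X,Y} ‖ p_X p_Y)`. -/
noncomputable def mutInfo {Ω α β : Type*} [Fintype Ω] [Fintype α] [Fintype β]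
    [DecidableEq α] [DecidableEq β]
    (μ : Ω → ℝ) (X : Ω → α) (Y : Ω → β) : ℝ :=
  KLdiv (distOf μ (fun ω => (X ω, Y ω))) (fun ab => distOf μ X ab.1 * distOf μ Y ab.2)

/-- The probability measure `μ` conditioned on the event `Z = z`. -/
noncomputable def pcond {Ω γ : Type*} [Fintype Ω] [DecidableEq γ]
    (μ : Ω → ℝ) (Z : Ω → γ) (z : γ) : Ω → ℝ :=
  fun ω => if Z ω = z then μ ω / distOf μ Z z else 0

/-- Conditional mutual information `I(X;Y∣Z)`. -/
noncomputable def condMutInfo {Ω α β γ : Type*} [Fintype Ω] [Fintype α] [Fintype β] [Fintype γ]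
    [DecidableEq α] [DecidableEq β] [DecidableEq γ]
    (μ : Ω → ℝ) (X : Ω → α) (Y : Ω → β) (Z : Ω → γ) : ℝ :=
  ∑ z, distOf μ Z z * mutInfo (pcond μ Z z) X Y

/-- Restriction of `x : Fin L → 𝕏` to a subset `S` of coordinates. -/
def restr {L : ℕ} {𝕏 : Type*} (S : Finset (Fin L)) (x : Fin L → 𝕏) : ↥S → 𝕏 :=
  fun i => x i.1

/-- `μ` conditioned on the event that `X` agrees with `x` on the coordinate set `W`. -/
noncomputable def condOn {Ω : Type*} {L : ℕ} {𝕏 : Type*} [Fintype Ω] [Fintype 𝕏] [DecidableEq 𝕏]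
    (μ : Ω → ℝ) (X : Ω → Fin L → 𝕏) (W : Finset (Fin L)) (x : Fin L → 𝕏) : Ω → ℝ :=
  pcond μ (fun ω => restr W (X ω)) (restr W x)


set_option linter.unusedSectionVars false

section Helpers

variable {Ω 𝕏 : Type*} [Fintype Ω] [Fintype 𝕏] [DecidableEq 𝕏] {L : ℕ}

lemma restr_eq_iff {S : Finset (Fin L)} {x y : Fin L → 𝕏} :
    restr S x = restr S y ↔ ∀ i ∈ S, x i = y i := by
  constructor
  · intro h i hi; exact congrFun h ⟨i, hi⟩
  · intro h; funext i; exact h i.1 i.2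

lemma distOf_nonneg {α : Type*} [DecidableEq α] (μ : Ω → ℝ) (h : ∀ ω, 0 ≤ μ ω)
    (X : Ω → α) (a : α) : 0 ≤ distOf μ X a :=
  Finset.sum_nonneg fun ω _ => h ω

lemma sum_distOf_mul {α : Type*} [Fintype α] [DecidableEq α] (μ : Ω → ℝ) (g : Ω → α)
    (F : α → ℝ) : ∑ a, distOf μ g a * F a = ∑ ω, μ ω * F (g ω) := by
  unfold distOf
  rw [← Finset.sum_fiberwise univ g (fun ω => μ ω * F (g ω))]
  refine Finset.sum_congr rfl fun a _ => ?_
  rw [Finset.sum_mul]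
  exact Finset.sum_congr rfl fun ω hω => by rw [(Finset.mem_filter.mp hω).2]

lemma distOf_pcond {α γ : Type*} [DecidableEq α] [DecidableEq γ]
    (μ : Ω → ℝ) (Z : Ω → γ) (z : γ) (g : Ω → α) (a : α) :
    distOf (pcond μ Z z) g a =
      (∑ ω ∈ Finset.univ.filter (fun ω => g ω = a ∧ Z ω = z), μ ω) / distOf μ Z z := by
  unfold distOf pcond
  rw [Finset.sum_div]
  rw [Finset.sum_filter, Finset.sum_filter]
  refine Finset.sum_congr rfl fun ω _ => ?_
  split_ifs with h1 h2 h3 <;> simp_all [distOf, zero_div]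

/-- `distOf` of a restriction to a set equal to `∅` is `1`. -/
lemma distOf_restr_of_empty {S : Finset (Fin L)} (hS : S = ∅) (μ : Ω → ℝ)
    (hmu1 : ∑ ω, μ ω = 1) (X : Ω → Fin L → 𝕏) (z : ↥S → 𝕏) :
    distOf μ (fun ω => restr S (X ω)) z = 1 := by
  subst hS
  unfold distOf
  have : ∀ ω : Ω, restr (∅ : Finset (Fin L)) (X ω) = z := by
    intro ω; funext i; exact (Finset.notMem_empty i.1 i.2).elim
  rw [Finset.filter_true_of_mem fun ω _ => this ω]
  simpa using hmu1

lemma distOf_restr_of_univ {S : Finset (Fin L)} (hS : S = Finset.univ) (μ : Ω → ℝ)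
    (X : Ω → Fin L → 𝕏) (x : Fin L → 𝕏) :
    distOf μ (fun ω => restr S (X ω)) (restr S x) = distOf μ X x := by
  subst hS
  unfold distOf
  refine Finset.sum_congr ?_ fun _ _ => rfl
  apply Finset.filter_congr
  intro ω _
  constructor
  · intro h; funext i; exact congrFun h ⟨i, Finset.mem_univ i⟩
  · intro h; simpa using congrArg (restr Finset.univ) h

lemma distOf_le_distOf_restr (μ : Ω → ℝ) (hmu0 : ∀ ω, 0 ≤ μ ω) (X : Ω → Fin L → 𝕏)
    (S : Finset (Fin L)) (x : Fin L → 𝕏) :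
    distOf μ X x ≤ distOf μ (fun ω => restr S (X ω)) (restr S x) := by
  unfold distOf
  refine Finset.sum_le_sum_of_subset_of_nonneg ?_ fun ω _ _ => hmu0 ω
  intro ω hω
  simp only [Finset.mem_filter, Finset.mem_univ, true_and] at hω ⊢
  rw [hω]

end Helpers

section Wmach

variable {Ω 𝕏 : Type*} [Fintype Ω] [Fintype 𝕏] [DecidableEq 𝕏] {L : ℕ}

lemma W_subset (W : ℕ → (Fin L → 𝕏) → Finset (Fin L))
    (hmono : ∀ x t, W t x ⊆ W (t+1) x) (x : Fin L → 𝕏) {s t : ℕ} (h : s ≤ t) :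
    W s x ⊆ W t x :=
  Nat.le_induction subset_rfl (fun n _ ih => ih.trans (hmono x n)) t h

lemma W_det (W : ℕ → (Fin L → 𝕏) → Finset (Fin L))
    (hW0 : ∀ x, W 0 x = ∅) (hmono : ∀ x t, W t x ⊆ W (t+1) x)
    (hadapt : ∀ t x x', W t x = W t x' → (∀ i ∈ W t x, x i = x' i) →
      W (t+1) x = W (t+1) x') :
    ∀ t (x x' : Fin L → 𝕏), (∀ i ∈ W t x, x i = x' i) → W t x = W t x' := by
  intro t
  induction t with
  | zero => intro x x' _; rw [hW0, hW0]
  | succ n ih =>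
    intro x x' hag
    have h1 : W n x = W n x' := ih x x' fun i hi => hag i (hmono x n hi)
    exact hadapt n x x' h1 fun i hi => hag i (hmono x n hi)

lemma W_eq_univ (W : ℕ → (Fin L → 𝕏) → Finset (Fin L))
    (hmono : ∀ x t, W t x ⊆ W (t+1) x) (T : (Fin L → 𝕏) → ℕ)
    (hfull : ∀ x, W (T x) x = Finset.univ) {t : ℕ} {x : Fin L → 𝕏} (h : T x ≤ t) :
    W t x = Finset.univ :=
  Finset.univ_subset_iff.mp (hfull x ▸ W_subset W hmono x h)

end Wmach

section Defs

variable {Ω 𝕏 : Type*} [Fintype Ω] [Fintype 𝕏] [DecidableEq 𝕏] {L : ℕ}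

noncomputable def mOf (μ : Ω → ℝ) (X : Ω → Fin L → 𝕏) (S : Finset (Fin L))
    (x : Fin L → 𝕏) : ℝ :=
  distOf μ (fun ω => restr S (X ω)) (restr S x)

noncomputable def Jd (μ : Ω → ℝ) (X : Ω → Fin L → 𝕏) (W : ℕ → (Fin L → 𝕏) → Finset (Fin L))
    (t : ℕ) (x : Fin L → 𝕏) (y : ↥(W (t+1) x \ W t x) → 𝕏) : ℝ :=
  distOf (condOn μ X (W t x) x) (fun ω => restr (W (t+1) x \ W t x) (X ω)) y

noncomputable def Pd (μ : Ω → ℝ) (X : Ω → Fin L → 𝕏) (W : ℕ → (Fin L → 𝕏) → Finset (Fin L))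
    (t : ℕ) (x : Fin L → 𝕏) (y : ↥(W (t+1) x \ W t x) → 𝕏) : ℝ :=
  ∏ i : ↥(W (t+1) x \ W t x), distOf (condOn μ X (W t x) x) (fun ω => X ω i.1) (y i)

noncomputable def ellt (μ : Ω → ℝ) (X : Ω → Fin L → 𝕏) (W : ℕ → (Fin L → 𝕏) → Finset (Fin L))
    (t : ℕ) (x : Fin L → 𝕏) (y : ↥(W (t+1) x \ W t x) → 𝕏) : ℝ :=
  Real.log (Jd μ X W t x y / Pd μ X W t x y)

end Defs

section Transfer

variable {Ω 𝕏 : Type*} [Fintype Ω] [Fintype 𝕏] [DecidableEq 𝕏] {L : ℕ}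
variable (μ : Ω → ℝ) (X : Ω → Fin L → 𝕏) (W : ℕ → (Fin L → 𝕏) → Finset (Fin L))

lemma cond_transfer (t : ℕ) (x x' : Fin L → 𝕏) (hag : ∀ i ∈ W t x, x i = x' i)
    (hS : W t x' = W t x) :
    condOn μ X (W t x') x' = condOn μ X (W t x) x := by
  rw [hS]
  unfold condOn
  rw [restr_eq_iff.mpr fun i hi => (hag i hi).symm]

variable (hW0 : ∀ x, W 0 x = ∅) (hmono : ∀ x t, W t x ⊆ W (t+1) x)
    (hadapt : ∀ t x x', W t x = W t x' → (∀ i ∈ W t x, x i = x' i) →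
      W (t+1) x = W (t+1) x')

include hW0 hmono hadapt in
lemma ell_transfer (t : ℕ) (x x' : Fin L → 𝕏) (hag : ∀ i ∈ W t x, x i = x' i) :
    ellt μ X W t x' (restr (W (t+1) x' \ W t x') x') =
      ellt μ X W t x (restr (W (t+1) x \ W t x) x') := by
  have hS : W t x' = W t x := (W_det W hW0 hmono hadapt t x x' hag).symm
  have hS1 : W (t+1) x' = W (t+1) x := (hadapt t x x' hS.symm hag).symm
  have hc : condOn μ X (W t x') x' = condOn μ X (W t x) x :=
    cond_transfer μ X W t x x' hag hS
  unfold ellt Jd Pd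
  rw [hc, hS1, hS]

include hW0 hmono hadapt in
lemma KL_transfer (t : ℕ) (x x' : Fin L → 𝕏) (hag : ∀ i ∈ W t x, x i = x' i) :
    (∑ y, Jd μ X W t x' y * ellt μ X W t x' y) =
      ∑ y, Jd μ X W t x y * ellt μ X W t x y := by
  have hS : W t x' = W t x := (W_det W hW0 hmono hadapt t x x' hag).symm
  have hS1 : W (t+1) x' = W (t+1) x := (hadapt t x x' hS.symm hag).symm
  have hc : condOn μ X (W t x') x' = condOn μ X (W t x) x :=
    cond_transfer μ X W t x x' hag hS
  unfold ellt Jd Pd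
  rw [hc, hS1, hS]

include hW0 hmono hadapt in
lemma m_transfer (t : ℕ) (x x' : Fin L → 𝕏) (hag : ∀ i ∈ W t x, x i = x' i) :
    mOf μ X (W t x') x' = mOf μ X (W t x) x := by
  have hS : W t x' = W t x := (W_det W hW0 hmono hadapt t x x' hag).symm
  unfold mOf
  rw [hS, restr_eq_iff.mpr fun i hi => (hag i hi).symm]

include hW0 hmono hadapt in
lemma match_iff (t : ℕ) (x : Fin L → 𝕏) (x' : Fin L → 𝕏) :
    (restr (W t x) x' = restr (W t x) x) ↔ (restr (W t x') x = restr (W t x') x') := by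
  constructor
  · intro h
    have hag : ∀ i ∈ W t x, x i = x' i := fun i hi => (restr_eq_iff.mp h i hi).symm
    have hS : W t x = W t x' := W_det W hW0 hmono hadapt t x x' hag
    rw [← hS]
    exact restr_eq_iff.mpr hag
  · intro h
    have hag : ∀ i ∈ W t x', x' i = x i := fun i hi => (restr_eq_iff.mp h i hi).symm
    have hS : W t x' = W t x := W_det W hW0 hmono hadapt t x' x hag
    rw [← hS]
    exact restr_eq_iff.mpr hag

end Transfer

section Quant

variable {Ω 𝕏 : Type*} [Fintype Ω] [Fintype 𝕏] [DecidableEq 𝕏] {L : ℕ}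

/-- Chain rule: conditional probability of the batch along the trajectory. -/
lemma J_eq (μ : Ω → ℝ) (X : Ω → Fin L → 𝕏) (W : ℕ → (Fin L → 𝕏) → Finset (Fin L))
    (hmono : ∀ x t, W t x ⊆ W (t+1) x) (t : ℕ) (x : Fin L → 𝕏) :
    Jd μ X W t x (restr (W (t+1) x \ W t x) x) =
      mOf μ X (W (t+1) x) x / mOf μ X (W t x) x := by
  unfold Jd condOn mOf
  rw [distOf_pcond]
  congr 1
  unfold distOf
  refine Finset.sum_congr ?_ fun _ _ => rfl
  apply Finset.filter_congr
  intro ω _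
  simp only [restr_eq_iff, Finset.mem_sdiff]
  constructor
  · rintro ⟨h1, h2⟩ i hi
    by_cases hw : i ∈ W t x
    · exact h2 i hw
    · exact h1 i ⟨hi, hw⟩
  · intro h
    exact ⟨fun i hi => h i hi.1, fun i hi => h i (hmono x t hi)⟩

lemma mu_le_p (μ : Ω → ℝ) (hmu0 : ∀ ω, 0 ≤ μ ω) (X : Ω → Fin L → 𝕏) (ω : Ω) :
    μ ω ≤ distOf μ X (X ω) := by
  unfold distOf
  exact Finset.single_le_sum (fun ω' _ => hmu0 ω') (by simp)

lemma marg_pos (μ : Ω → ℝ) (hmu0 : ∀ ω, 0 ≤ μ ω) (X : Ω → Fin L → 𝕏)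
    (S : Finset (Fin L)) (x : Fin L → 𝕏) (i : Fin L)
    (hp : 0 < distOf μ X x) :
    0 < distOf (condOn μ X S x) (fun ω => X ω i) (x i) := by
  have hm : 0 < mOf μ X S x :=
    lt_of_lt_of_le hp (distOf_le_distOf_restr μ hmu0 X S x)
  unfold condOn
  rw [distOf_pcond]
  apply div_pos _ hm
  refine lt_of_lt_of_le hp ?_
  unfold distOf
  refine Finset.sum_le_sum_of_subset_of_nonneg ?_ fun ω _ _ => hmu0 ω
  intro ω hω
  simp only [Finset.mem_filter, Finset.mem_univ, true_and] at hω ⊢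
  rw [hω]
  exact ⟨rfl, rfl⟩

lemma mass_restr (μ : Ω → ℝ) (X : Ω → Fin L → 𝕏) (S : Finset (Fin L)) (x₀ : Fin L → 𝕏) :
    ∑ x, (if restr S x = restr S x₀ then distOf μ X x else 0) =
      mOf μ X S x₀ := by
  have h := sum_distOf_mul μ X (fun x => if restr S x = restr S x₀ then (1:ℝ) else 0)
  calc ∑ x, (if restr S x = restr S x₀ then distOf μ X x else 0)
      = ∑ x, distOf μ X x * (if restr S x = restr S x₀ then (1:ℝ) else 0) := by
        refine Finset.sum_congr rfl fun x _ => ?_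
        split_ifs <;> simp
    _ = ∑ ω, μ ω * (if restr S (X ω) = restr S x₀ then (1:ℝ) else 0) := h
    _ = ∑ ω ∈ Finset.univ.filter (fun ω => restr S (X ω) = restr S x₀), μ ω := by
        rw [Finset.sum_filter]
        refine Finset.sum_congr rfl fun ω _ => ?_
        split_ifs <;> simp
    _ = _ := rfl

end Quant

set_option maxHeartbeats 2000000
section PerT

variable {Ω 𝕏 : Type*} [Fintype Ω] [Fintype 𝕏] [DecidableEq 𝕏] {L : ℕ}

lemma per_t (μ : Ω → ℝ) (hmu0 : ∀ ω, 0 ≤ μ ω) (X : Ω → Fin L → 𝕏)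
    (W : ℕ → (Fin L → 𝕏) → Finset (Fin L))
    (hW0 : ∀ x, W 0 x = ∅) (hmono : ∀ x t, W t x ⊆ W (t+1) x)
    (hadapt : ∀ t x x', W t x = W t x' → (∀ i ∈ W t x, x i = x' i) →
      W (t+1) x = W (t+1) x')
    (t : ℕ) :
    ∑ x, distOf μ X x * ellt μ X W t x (restr (W (t+1) x \ W t x) x)
      = ∑ x, distOf μ X x * ∑ y, Jd μ X W t x y * ellt μ X W t x y := by
  classical
  have key : ∀ x : Fin L → 𝕏,
      distOf μ X x * ∑ y, Jd μ X W t x y * ellt μ X W t x y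
        = ∑ ω, (if restr (W t x) (X ω) = restr (W t x) x
            then distOf μ X x * ((μ ω / mOf μ X (W t x) x)
              * ellt μ X W t x (restr (W (t+1) x \ W t x) (X ω))) else 0) := by
    intro x
    have e1 : ∀ y, Jd μ X W t x y * ellt μ X W t x y
        = ∑ ω ∈ (Finset.univ.filter fun ω =>
              restr (W t x) (X ω) = restr (W t x) x).filter
            (fun ω => restr (W (t+1) x \ W t x) (X ω) = y),
            (μ ω / mOf μ X (W t x) x) * ellt μ X W t x y := by
      intro y
      rw [show Jd μ X W t x y = (∑ ω ∈ Finset.univ.filter (fun ω =>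
            restr (W (t+1) x \ W t x) (X ω) = y ∧
              restr (W t x) (X ω) = restr (W t x) x), μ ω)
            / mOf μ X (W t x) x from distOf_pcond μ _ _ _ y]
      rw [Finset.sum_div, Finset.sum_mul, Finset.filter_filter]
      refine (Finset.sum_congr ?_ fun _ _ => rfl).symm
      apply Finset.filter_congr
      intro ω _
      exact and_comm
    calc distOf μ X x * ∑ y, Jd μ X W t x y * ellt μ X W t x y
        = distOf μ X x * ∑ y, ∑ ω ∈ (Finset.univ.filter fun ω =>
              restr (W t x) (X ω) = restr (W t x) x).filter
            (fun ω => restr (W (t+1) x \ W t x) (X ω) = y),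
            (μ ω / mOf μ X (W t x) x)
              * ellt μ X W t x (restr (W (t+1) x \ W t x) (X ω)) := by
          rw [Finset.sum_congr rfl fun y _ => e1 y]
          congr 1
          refine Finset.sum_congr rfl fun y _ => Finset.sum_congr rfl fun ω hω => ?_
          rw [(Finset.mem_filter.mp hω).2]
      _ = distOf μ X x * ∑ ω ∈ (Finset.univ.filter fun ω =>
              restr (W t x) (X ω) = restr (W t x) x),
            (μ ω / mOf μ X (W t x) x)
              * ellt μ X W t x (restr (W (t+1) x \ W t x) (X ω)) := by
          rw [Finset.sum_fiberwise]
      _ = _ := by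
          rw [Finset.mul_sum, Finset.sum_filter]
  have key2 : ∀ ω : Ω,
      (∑ x, (if restr (W t x) (X ω) = restr (W t x) x
          then distOf μ X x * ((μ ω / mOf μ X (W t x) x)
            * ellt μ X W t x (restr (W (t+1) x \ W t x) (X ω))) else 0))
        = μ ω * ellt μ X W t (X ω) (restr (W (t+1) (X ω) \ W t (X ω)) (X ω)) := by
    intro ω
    have step1 : ∀ x : Fin L → 𝕏,
        (if restr (W t x) (X ω) = restr (W t x) x
          then distOf μ X x * ((μ ω / mOf μ X (W t x) x)
            * ellt μ X W t x (restr (W (t+1) x \ W t x) (X ω))) else 0)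
        = (if restr (W t (X ω)) x = restr (W t (X ω)) (X ω) then distOf μ X x else 0)
            * ((μ ω / mOf μ X (W t (X ω)) (X ω))
              * ellt μ X W t (X ω) (restr (W (t+1) (X ω) \ W t (X ω)) (X ω))) := by
      intro x
      by_cases hc : restr (W t x) (X ω) = restr (W t x) x
      · rw [if_pos hc, if_pos ((match_iff W hW0 hmono hadapt t x (X ω)).mp hc)]
        have hag : ∀ i ∈ W t x, x i = X ω i := fun i hi => (restr_eq_iff.mp hc i hi).symm
        rw [← m_transfer μ X W hW0 hmono hadapt t x (X ω) hag,
            ← ell_transfer μ X W hW0 hmono hadapt t x (X ω) hag]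
      · rw [if_neg hc, if_neg (fun h => hc ((match_iff W hW0 hmono hadapt t x (X ω)).mpr h)),
          zero_mul]
    rw [Finset.sum_congr rfl fun x _ => step1 x, ← Finset.sum_mul,
      mass_restr μ X (W t (X ω)) (X ω)]
    by_cases hz : mOf μ X (W t (X ω)) (X ω) = 0
    · have hμ : μ ω = 0 :=
        le_antisymm (hz ▸ ((mu_le_p μ hmu0 X ω).trans
          (distOf_le_distOf_restr μ hmu0 X (W t (X ω)) (X ω)))) (hmu0 ω)
      rw [hμ, hz]
      ring
    · field_simp
  rw [Finset.sum_congr rfl fun x _ => key x, Finset.sum_comm,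
    Finset.sum_congr rfl fun ω _ => key2 ω]
  exact sum_distOf_mul μ X (fun x => ellt μ X W t x (restr (W (t+1) x \ W t x) x))

end PerT

section Vanish

variable {Ω 𝕏 : Type*} [Fintype Ω] [Fintype 𝕏] [DecidableEq 𝕏] {L : ℕ}

lemma KL_vanish (μ : Ω → ℝ) (X : Ω → Fin L → 𝕏) (W : ℕ → (Fin L → 𝕏) → Finset (Fin L))
    (t : ℕ) (x : Fin L → 𝕏)
    (hD : W (t+1) x \ W t x = ∅) (hm : mOf μ X (W t x) x ≠ 0) :
    ∑ y, Jd μ X W t x y * ellt μ X W t x y = 0 := by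
  haveI hie : IsEmpty ↥(W (t+1) x \ W t x) := Finset.isEmpty_coe_sort.mpr hD
  have hJ : ∀ y, Jd μ X W t x y = 1 := by
    intro y
    unfold Jd condOn
    rw [distOf_pcond]
    have h1 : ∀ ω : Ω, restr (W (t+1) x \ W t x) (X ω) = y := by
      intro ω; funext i; exact isEmptyElim i
    rw [Finset.filter_congr (fun ω _ => (and_iff_right (h1 ω)))]
    exact div_self hm
  have hP : ∀ y, Pd μ X W t x y = 1 := by
    intro y
    unfold Pd
    rw [Finset.univ_eq_empty, Finset.prod_empty]
  refine Finset.sum_eq_zero fun y _ => ?_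
  unfold ellt
  rw [hJ y, hP y, div_one, Real.log_one, mul_zero]

end Vanish


/-- The KL divergence between the data distribution and the factorized sampler equals the
expected sum over iterations of the pointwise KL between the true conditional joint of each
batch and the product of its conditional marginals, along the trajectory. -/
theorem KL_eq_expected_sum_batch_KL
    {Ω 𝕏 : Type*} [Fintype Ω] [Fintype 𝕏] [DecidableEq 𝕏] (L : ℕ)
    (μ : Ω → ℝ) (hmu0 : ∀ ω, 0 ≤ μ ω) (hmu1 : ∑ ω, μ ω = 1)
    (X : Ω → Fin L → 𝕏)
    (W : ℕ → (Fin L → 𝕏) → Finset (Fin L)) (T : (Fin L → 𝕏) → ℕ)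
    (hW0 : ∀ x, W 0 x = ∅)
    (hmono : ∀ x t, W t x ⊆ W (t+1) x)
    (hfull : ∀ x, W (T x) x = Finset.univ)
    (hadapt : ∀ t x x', W t x = W t x' → (∀ i ∈ W t x, x i = x' i) →
      W (t+1) x = W (t+1) x') :
    KLdiv (distOf μ X)
        (fun x => ∏ t ∈ Finset.range (T x), ∏ i ∈ W (t+1) x \ W t x,
          distOf (condOn μ X (W t x) x) (fun ω => X ω i) (x i)) =
      ∑ x, distOf μ X x * ∑ t ∈ Finset.range (T x),
        KLdiv (distOf (condOn μ X (W t x) x)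
            (fun ω => restr (W (t+1) x \ W t x) (X ω)))
          (fun y => ∏ i : ↥(W (t+1) x \ W t x),
            distOf (condOn μ X (W t x) x) (fun ω => X ω i.1) (y i)) := by
  classical
  obtain ⟨N, hN⟩ : ∃ N, ∀ x : Fin L → 𝕏, T x ≤ N :=
    ⟨Finset.univ.sup T, fun x => Finset.le_sup (Finset.mem_univ x)⟩
  have hDempty : ∀ (t : ℕ) (x : Fin L → 𝕏), T x ≤ t → W (t+1) x \ W t x = ∅ := by
    intro t x ht
    rw [W_eq_univ W hmono T hfull (ht.trans (Nat.le_succ t)),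
      W_eq_univ W hmono T hfull ht, Finset.sdiff_self]
  have hKLdef : ∀ (t : ℕ) (x : Fin L → 𝕏),
      KLdiv (distOf (condOn μ X (W t x) x)
          (fun ω => restr (W (t+1) x \ W t x) (X ω)))
        (fun y => ∏ i : ↥(W (t+1) x \ W t x),
          distOf (condOn μ X (W t x) x) (fun ω => X ω i.1) (y i))
      = ∑ y, Jd μ X W t x y * ellt μ X W t x y := fun t x => rfl
  have hR : (∑ x, distOf μ X x * ∑ t ∈ Finset.range (T x),
        KLdiv (distOf (condOn μ X (W t x) x)
            (fun ω => restr (W (t+1) x \ W t x) (X ω)))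
          (fun y => ∏ i : ↥(W (t+1) x \ W t x),
            distOf (condOn μ X (W t x) x) (fun ω => X ω i.1) (y i)))
      = ∑ x, distOf μ X x * ∑ t ∈ Finset.range N,
          ∑ y, Jd μ X W t x y * ellt μ X W t x y := by
    refine Finset.sum_congr rfl fun x _ => ?_
    rcases eq_or_ne (distOf μ X x) 0 with h0 | h0
    · rw [h0, zero_mul, zero_mul]
    · have hpos : 0 < distOf μ X x := (distOf_nonneg μ hmu0 X x).lt_of_ne (Ne.symm h0)
      congr 1
      rw [Finset.sum_congr rfl fun t _ => hKLdef t x]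
      refine Finset.sum_subset (Finset.range_subset_range.mpr (hN x)) ?_
      intro t _ ht
      have hT : T x ≤ t := le_of_not_gt fun hlt => ht (Finset.mem_range.mpr hlt)
      refine KL_vanish μ X W t x (hDempty t x hT) ?_
      exact ne_of_gt (lt_of_lt_of_le hpos (distOf_le_distOf_restr μ hmu0 X (W t x) x))
  have hL : KLdiv (distOf μ X)
        (fun x => ∏ t ∈ Finset.range (T x), ∏ i ∈ W (t+1) x \ W t x,
          distOf (condOn μ X (W t x) x) (fun ω => X ω i) (x i))
      = ∑ x, distOf μ X x * ∑ t ∈ Finset.range N,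
          ellt μ X W t x (restr (W (t+1) x \ W t x) x) := by
    unfold KLdiv
    refine Finset.sum_congr rfl fun x _ => ?_
    beta_reduce
    rcases eq_or_ne (distOf μ X x) 0 with h0 | h0
    · rw [h0, zero_mul, zero_mul]
    · have hpos : 0 < distOf μ X x := (distOf_nonneg μ hmu0 X x).lt_of_ne (Ne.symm h0)
      have hmpos : ∀ S : Finset (Fin L), 0 < mOf μ X S x :=
        fun S => lt_of_lt_of_le hpos (distOf_le_distOf_restr μ hmu0 X S x)
      have hmargpos : ∀ (t : ℕ) (i : Fin L),
          0 < distOf (condOn μ X (W t x) x) (fun ω => X ω i) (x i) :=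
        fun t i => marg_pos μ hmu0 X (W t x) x i hpos
      have hPdpos : ∀ t : ℕ, 0 < Pd μ X W t x (restr (W (t+1) x \ W t x) x) :=
        fun t => Finset.prod_pos fun i _ => hmargpos t i.1
      have hJpos : ∀ t : ℕ, 0 < Jd μ X W t x (restr (W (t+1) x \ W t x) x) := by
        intro t
        rw [J_eq μ X W hmono t x]
        exact div_pos (hmpos _) (hmpos _)
      have hPt : ∀ t : ℕ,
          (∏ i ∈ W (t+1) x \ W t x,
              distOf (condOn μ X (W t x) x) (fun ω => X ω i) (x i))
            = Pd μ X W t x (restr (W (t+1) x \ W t x) x) :=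
        fun t => (Finset.prod_coe_sort (W (t+1) x \ W t x)
          (fun i => distOf (condOn μ X (W t x) x) (fun ω => X ω i) (x i))).symm
      have hqN : (∏ t ∈ Finset.range (T x), ∏ i ∈ W (t+1) x \ W t x,
            distOf (condOn μ X (W t x) x) (fun ω => X ω i) (x i))
          = ∏ t ∈ Finset.range N, Pd μ X W t x (restr (W (t+1) x \ W t x) x) := by
        rw [Finset.prod_congr rfl fun t _ => hPt t]
        refine Finset.prod_subset (Finset.range_subset_range.mpr (hN x)) ?_
        intro t _ ht
        have hT : T x ≤ t := le_of_not_gt fun hlt => ht (Finset.mem_range.mpr hlt)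
        haveI := Finset.isEmpty_coe_sort.mpr (hDempty t x hT)
        unfold Pd
        rw [Finset.univ_eq_empty, Finset.prod_empty]
      congr 1
      rw [hqN, Real.log_div h0 (ne_of_gt (Finset.prod_pos fun t _ => hPdpos t)),
        Real.log_prod fun t _ => ne_of_gt (hPdpos t)]
      have hlogp : Real.log (distOf μ X x)
          = ∑ t ∈ Finset.range N,
              (Real.log (mOf μ X (W (t+1) x) x) - Real.log (mOf μ X (W t x) x)) := by
        rw [Finset.sum_range_sub (fun t => Real.log (mOf μ X (W t x) x)),
          show mOf μ X (W N x) x = distOf μ X x from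
            distOf_restr_of_univ (W_eq_univ W hmono T hfull (hN x)) μ X x,
          show mOf μ X (W 0 x) x = 1 from
            distOf_restr_of_empty (hW0 x) μ hmu1 X _,
          Real.log_one, sub_zero]
      rw [hlogp, ← Finset.sum_sub_distrib]
      refine Finset.sum_congr rfl fun t _ => ?_
      unfold ellt
      rw [Real.log_div (ne_of_gt (hJpos t)) (ne_of_gt (hPdpos t)), J_eq μ X W hmono t x,
        Real.log_div (ne_of_gt (hmpos _)) (ne_of_gt (hmpos _))]
  rw [hL, hR]
  have swap : ∀ F : (Fin L → 𝕏) → ℕ → ℝ,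
      (∑ x, distOf μ X x * ∑ t ∈ Finset.range N, F x t)
        = ∑ t ∈ Finset.range N, ∑ x, distOf μ X x * F x t := by
    intro F
    simp_rw [Finset.mul_sum]
    exact Finset.sum_comm
  rw [swap (fun x t => ellt μ X W t x (restr (W (t+1) x \ W t x) x)),
    swap (fun x t => ∑ y, Jd μ X W t x y * ellt μ X W t x y)]
  exact Finset.sum_congr rfl fun t _ => per_t μ hmu0 X W hW0 hmono hadapt t
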